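/- For all real a, b > 0, ∫_{x ∈ (0,1)} (log x) · x^(a−1) · (1−x)^(b−1) dx = B(a, b) · (ψ(a) − ψ(a + b)). (This is the two-category case of the Dirichlet identity E[log θ_j] = Ψ(α̂_j) − Ψ(Σ_i α̂_i) used in the variational cluster-assignment update r_{t(k)}.) -/

import Mathlib

open Real

/-- The digamma function: the derivative of `log ∘ Γ`. -/
noncomputable def digamma (s : ℝ) : ℝ :=
  deriv (fun u : ℝ => Real.log (Real.Gamma u)) s

/-- The Beta function `B(a, b) = ∫_{(0,1)} x^(a−1) (1−x)^(b−1) dx`. -/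
noncomputable def betaIntegral (a b : ℝ) : ℝ :=
  ∫ x in Set.Ioo (0 : ℝ) 1, x ^ (a - 1) * (1 - x) ^ (b - 1)

open MeasureTheory Set

lemma digamma_eq {s : ℝ} (hs : 0 < s) :
    digamma s = deriv Real.Gamma s / Real.Gamma s := by
  have hne : ∀ m : ℕ, s ≠ -m := fun m => ((neg_nonpos.mpr (Nat.cast_nonneg m)).trans_lt hs).ne'
  have h : HasDerivAt (fun u : ℝ => Real.log (Real.Gamma u))
      (deriv Real.Gamma s / Real.Gamma s) s :=
    (Real.differentiableAt_Gamma hne).hasDerivAt.log (Real.Gamma_pos_of_pos hs).ne'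
  exact h.deriv

lemma betaKernel_integrableOn {u v : ℝ} (hu : 0 < u) (hv : 0 < v) :
    IntegrableOn (fun x : ℝ => x ^ (u - 1) * (1 - x) ^ (v - 1)) (Ioo 0 1) := by
  have h := (Complex.betaIntegral_convergent (u := u) (v := v) (by simpa) (by simpa)).norm
  rw [intervalIntegrable_iff_integrableOn_Ioc_of_le zero_le_one] at h
  have h2 : IntegrableOn (fun x : ℝ => x ^ (u - 1) * (1 - x) ^ (v - 1)) (Ioc 0 1) := by
    refine h.congr ?_
    filter_upwards [MeasureTheory.ae_restrict_mem measurableSet_Ioc] with x hx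
    have hx0 : (0:ℝ) ≤ x := hx.1.le
    have hx1 : (0:ℝ) ≤ 1 - x := by linarith [hx.2]
    have e1 : ((x:ℂ)) ^ ((u:ℂ) - 1) = ((x ^ (u-1) : ℝ) : ℂ) := by
      rw [Complex.ofReal_cpow hx0]; push_cast; ring_nf
    have e2 : ((1:ℂ) - (x:ℂ)) ^ ((v:ℂ) - 1) = (((1-x) ^ (v-1) : ℝ) : ℂ) := by
      rw [show ((1:ℂ) - (x:ℂ)) = (((1-x):ℝ):ℂ) by push_cast; ring,
        Complex.ofReal_cpow hx1]
      push_cast; ring_nf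
    simp only [e1, e2, ← Complex.ofReal_mul, Complex.norm_real, Real.norm_eq_abs]
    rw [abs_of_nonneg (mul_nonneg (Real.rpow_nonneg hx0 _) (Real.rpow_nonneg hx1 _))]
  exact h2.mono_set Ioo_subset_Ioc_self

lemma betaIntegral_eq_Gamma {a b : ℝ} (ha : 0 < a) (hb : 0 < b) :
    betaIntegral a b = Real.Gamma a * Real.Gamma b / Real.Gamma (a + b) := by
  have key := Complex.Gamma_mul_Gamma_eq_betaIntegral (s := (a:ℂ)) (t := (b:ℂ)) (by simpa) (by simpa)
  have hbeta : Complex.betaIntegral a b = ((betaIntegral a b : ℝ) : ℂ) := by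
    rw [Complex.betaIntegral, intervalIntegral.integral_of_le zero_le_one]
    have : betaIntegral a b = ∫ x in Ioc (0:ℝ) 1, x ^ (a-1) * (1-x) ^ (b-1) := by
      rw [betaIntegral, MeasureTheory.integral_Ioc_eq_integral_Ioo]
    rw [this]
    refine Eq.trans (setIntegral_congr_fun measurableSet_Ioc fun x hx => ?_)
      (integral_ofReal (𝕜 := ℂ))
    have hx0 : (0:ℝ) ≤ x := hx.1.le
    have hx1 : (0:ℝ) ≤ 1 - x := by linarith [hx.2]
    have e1 : ((x:ℂ)) ^ ((a:ℂ) - 1) = ((x ^ (a-1) : ℝ) : ℂ) := by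
      rw [Complex.ofReal_cpow hx0]; push_cast; ring_nf
    have e2 : ((1:ℂ) - (x:ℂ)) ^ ((b:ℂ) - 1) = (((1-x) ^ (b-1) : ℝ) : ℂ) := by
      rw [show ((1:ℂ) - (x:ℂ)) = (((1-x):ℝ):ℂ) by push_cast; ring,
        Complex.ofReal_cpow hx1]
      push_cast; ring_nf
    simp [e1, e2]
  rw [hbeta, ← Complex.ofReal_add, Complex.Gamma_ofReal, Complex.Gamma_ofReal,
    Complex.Gamma_ofReal, ← Complex.ofReal_mul, ← Complex.ofReal_mul] at key
  have key3 : Real.Gamma a * Real.Gamma b = Real.Gamma (a+b) * betaIntegral a b :=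
    Complex.ofReal_injective key
  have hΓ : Real.Gamma (a + b) ≠ 0 := (Real.Gamma_pos_of_pos (by linarith)).ne'
  field_simp
  linarith [key3]

theorem integral_log_mul_beta_kernel (a b : ℝ) (ha : 0 < a) (hb : 0 < b) :
    ∫ x in Set.Ioo (0 : ℝ) 1, Real.log x * x ^ (a - 1) * (1 - x) ^ (b - 1) =
      betaIntegral a b * (digamma a - digamma (a + b)) := by
  -- derivative of the integral via dominated convergence
  set μ := volume.restrict (Ioo (0:ℝ) 1) with hμ
  set F : ℝ → ℝ → ℝ := fun t x => x ^ (t - 1) * (1 - x) ^ (b - 1) with hF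
  set F' : ℝ → ℝ → ℝ := fun t x => Real.log x * x ^ (t - 1) * (1 - x) ^ (b - 1) with hF'
  have hmeas : ∀ t : ℝ, AEStronglyMeasurable (F t) μ := by
    intro t
    refine (ContinuousOn.aestronglyMeasurable ?_ measurableSet_Ioo)
    refine ContinuousOn.mul ?_ ?_
    · exact fun x hx => ((Real.continuousAt_rpow_const x _ (Or.inl hx.1.ne')).continuousWithinAt)
    · refine fun x hx => (ContinuousWithinAt.rpow_const ?_ (Or.inl (by linarith [hx.2])))
      exact (continuous_const.sub continuous_id).continuousWithinAt
  have hmeas' : AEStronglyMeasurable (F' a) μ := by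
    refine (ContinuousOn.aestronglyMeasurable ?_ measurableSet_Ioo)
    refine ContinuousOn.mul (ContinuousOn.mul ?_ ?_) ?_
    · exact Real.continuousOn_log.mono fun x hx => by simpa using hx.1.ne'
    · exact fun x hx => ((Real.continuousAt_rpow_const x _ (Or.inl hx.1.ne')).continuousWithinAt)
    · refine fun x hx => (ContinuousWithinAt.rpow_const ?_ (Or.inl (by linarith [hx.2])))
      exact (continuous_const.sub continuous_id).continuousWithinAt
  have hint : Integrable (F a) μ := betaKernel_integrableOn ha hb
  have hbound_int : Integrable (fun x : ℝ => (4/a) * (x ^ (a/2 - 1) * (1 - x) ^ (b - 1))) μ :=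
    (betaKernel_integrableOn (by positivity : (0:ℝ) < a/2) hb).const_mul _
  have hε : (0:ℝ) < a/4 := by positivity
  have h_bound : ∀ᵐ x ∂μ, ∀ t ∈ Metric.ball a (a/4), ‖F' t x‖ ≤
      (4/a) * (x ^ (a/2 - 1) * (1 - x) ^ (b - 1)) := by
    rw [MeasureTheory.ae_restrict_iff' measurableSet_Ioo]
    filter_upwards with x hx
    intro t ht
    have hx0 : (0:ℝ) < x := hx.1
    have hx1 : x < 1 := hx.2
    have h1x : (0:ℝ) ≤ 1 - x := by linarith
    have ht' : a/2 - 1 ≤ -(a/4) + (t - 1) := by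
      rw [Metric.mem_ball, Real.dist_eq, abs_lt] at ht
      linarith [ht.1]
    have hlog : |Real.log x| ≤ x ^ (-(a/4)) / (a/4) := by
      rw [abs_of_nonpos (Real.log_nonpos hx0.le hx1.le), ← Real.log_inv]
      calc Real.log x⁻¹ ≤ (x⁻¹) ^ (a/4) / (a/4) :=
            Real.log_le_rpow_div (by positivity) hε
        _ = x ^ (-(a/4)) / (a/4) := by
            rw [Real.inv_rpow hx0.le, ← Real.rpow_neg hx0.le]
    have hxt : x ^ (-(a/4) + (t-1)) ≤ x ^ (a/2 - 1) :=
      Real.rpow_le_rpow_of_exponent_ge hx0 hx1.le ht'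
    have : ‖F' t x‖ = |Real.log x| * x ^ (t-1) * (1-x) ^ (b-1) := by
      rw [hF', Real.norm_eq_abs, abs_mul, abs_mul,
        abs_of_nonneg (Real.rpow_nonneg hx0.le _), abs_of_nonneg (Real.rpow_nonneg h1x _)]
    rw [this]
    calc |Real.log x| * x ^ (t-1) * (1-x) ^ (b-1)
        ≤ (x ^ (-(a/4)) / (a/4)) * x ^ (t-1) * (1-x) ^ (b-1) := by
          apply mul_le_mul_of_nonneg_right _ (Real.rpow_nonneg h1x _)
          exact mul_le_mul_of_nonneg_right hlog (Real.rpow_nonneg hx0.le _)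
      _ = (4/a) * (x ^ (-(a/4)) * x ^ (t-1)) * (1-x) ^ (b-1) := by
          rw [div_eq_mul_inv _ (a/4), inv_div]
          ring
      _ = (4/a) * x ^ (-(a/4) + (t-1)) * (1-x) ^ (b-1) := by
          rw [← Real.rpow_add hx0]
      _ ≤ (4/a) * x ^ (a/2-1) * (1-x) ^ (b-1) := by
          apply mul_le_mul_of_nonneg_right _ (Real.rpow_nonneg h1x _)
          exact mul_le_mul_of_nonneg_left hxt (by positivity)
      _ = (4/a) * (x ^ (a/2 - 1) * (1 - x) ^ (b - 1)) := by ring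
  have h_diff : ∀ᵐ x ∂μ, ∀ t ∈ Metric.ball a (a/4), HasDerivAt (fun t => F t x) (F' t x) t := by
    rw [MeasureTheory.ae_restrict_iff' measurableSet_Ioo]
    filter_upwards with x hx
    intro t _
    have hx0 : (0:ℝ) < x := hx.1
    have h1 : HasDerivAt (fun t : ℝ => x ^ (t - 1)) (x ^ (t-1) * Real.log x) t := by
      have := (Real.hasStrictDerivAt_const_rpow hx0 (t-1)).hasDerivAt
      have h2 := this.comp t ((hasDerivAt_id t).sub_const 1)
      simpa [Function.comp_def] using h2
    have := h1.mul_const ((1-x) ^ (b-1))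
    refine this.congr_deriv ?_
    simp only [hF']
    ring
  have key := hasDerivAt_integral_of_dominated_loc_of_deriv_le (Metric.ball_mem_nhds a hε)
    (Filter.Eventually.of_forall hmeas) hint hmeas' h_bound hbound_int h_diff
  have hD1 : HasDerivAt (fun t => betaIntegral t b)
      (∫ x in Ioo (0:ℝ) 1, Real.log x * x ^ (a-1) * (1-x) ^ (b-1)) a := key.2
  -- derivative of the Gamma formula
  have hΓa : Real.Gamma a ≠ 0 := (Real.Gamma_pos_of_pos ha).ne'
  have hΓab : Real.Gamma (a+b) ≠ 0 := (Real.Gamma_pos_of_pos (by linarith)).ne'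
  have hda : HasDerivAt Real.Gamma (deriv Real.Gamma a) a :=
    (Real.differentiableAt_Gamma (fun m => ((neg_nonpos.mpr (Nat.cast_nonneg m)).trans_lt ha).ne')).hasDerivAt
  have hdab : HasDerivAt (fun t : ℝ => Real.Gamma (t + b)) (deriv Real.Gamma (a+b)) a := by
    have := ((Real.differentiableAt_Gamma (s := a + b)
      (fun m => ((neg_nonpos.mpr (Nat.cast_nonneg m)).trans_lt (by linarith : (0:ℝ) < a + b)).ne')).hasDerivAt).comp a ((hasDerivAt_id a).add_const b)
    simpa [Function.comp_def] using this
  have hD2 : HasDerivAt (fun t : ℝ => Real.Gamma t * Real.Gamma b / Real.Gamma (t + b))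
      (betaIntegral a b * (digamma a - digamma (a+b))) a := by
    have := (hda.mul_const (Real.Gamma b)).div hdab hΓab
    refine this.congr_deriv ?_
    rw [betaIntegral_eq_Gamma ha hb, digamma_eq ha, digamma_eq (by linarith : (0:ℝ) < a+b)]
    field_simp
  have heq : (fun t => betaIntegral t b) =ᶠ[nhds a]
      (fun t : ℝ => Real.Gamma t * Real.Gamma b / Real.Gamma (t + b)) := by
    filter_upwards [eventually_gt_nhds ha] with t ht
    exact betaIntegral_eq_Gamma ht hb
  have hD2' : HasDerivAt (fun t => betaIntegral t b)
      (betaIntegral a b * (digamma a - digamma (a+b))) a := hD2.congr_of_eventuallyEq heq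
  exact hD1.unique hD2'
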